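/- arXiv:1202.0401 — 4 statements merged into one kernel-verified Lean document; each statement's English description precedes it below -/
import Mathlib

section
/- The number of n²×n² S-permutation matrices is (n!)^(2n). That is, the number of n²×n² permutation matrices that, when partitioned into n² blocks of size n×n, have exactly one entry equal to 1 in each block, equals (n!)^(2n). -/
/-- `A` is an S-permutation matrix: an n²×n² permutation matrix (indexed by
block-index × within-block-index) with exactly one 1 in each of the n² blocks. -/
def SPerm (n : ℕ) (A : Fin n × Fin n → Fin n × Fin n → Bool) : Prop :=
  (∀ i, ∃! j, A i j = true) ∧ (∀ j, ∃! i, A i j = true) ∧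
  (∀ s t : Fin n, ∃! p : Fin n × Fin n, A (s, p.1) (t, p.2) = true)

/-- Two binary matrices are disjoint: no common position where both are 1. -/
def MDisj {n : ℕ} (A B : Fin n × Fin n → Fin n × Fin n → Bool) : Prop :=
  ∀ i j, ¬(A i j = true ∧ B i j = true)

/-- Build an S-permutation matrix from two families of permutations. -/
def mkS (n : ℕ) (τ μ : Fin n → Equiv.Perm (Fin n)) :
    Fin n × Fin n → Fin n × Fin n → Bool :=
  fun p q => decide (τ p.1 p.2 = q.1 ∧ μ q.1 p.1 = q.2)

lemma mkS_eq_true_iff (n : ℕ) (τ μ : Fin n → Equiv.Perm (Fin n)) (p q : Fin n × Fin n) :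
    mkS n τ μ p q = true ↔ τ p.1 p.2 = q.1 ∧ μ q.1 p.1 = q.2 := by
  simp [mkS]

lemma mkS_sperm (n : ℕ) (τ μ : Fin n → Equiv.Perm (Fin n)) : SPerm n (mkS n τ μ) := by
  refine ⟨?_, ?_, ?_⟩
  · rintro ⟨s, a⟩
    refine ⟨(τ s a, μ (τ s a) s), ?_, ?_⟩
    · simp [mkS_eq_true_iff]
    · rintro ⟨t, b⟩ h
      rw [mkS_eq_true_iff] at h
      obtain ⟨h1, h2⟩ := h
      simp at h1 h2
      subst h1; subst h2; rfl
  · rintro ⟨t, b⟩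
    refine ⟨((μ t).symm b, (τ ((μ t).symm b)).symm t), ?_, ?_⟩
    · simp [mkS_eq_true_iff]
    · rintro ⟨s, a⟩ h
      rw [mkS_eq_true_iff] at h
      obtain ⟨h1, h2⟩ := h
      dsimp only at h1 h2
      have hs : s = (μ t).symm b := (μ t).eq_symm_apply.mpr h2
      subst hs
      exact Prod.ext rfl ((τ _).eq_symm_apply.mpr h1)
  · intro s t
    refine ⟨((τ s).symm t, μ t s), ?_, ?_⟩
    · simp [mkS_eq_true_iff]
    · rintro ⟨a, j⟩ h
      rw [mkS_eq_true_iff] at h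
      obtain ⟨h1, h2⟩ := h
      dsimp only at h1 h2
      exact Prod.ext ((τ s).eq_symm_apply.mpr h1) h2.symm

theorem stmt0 (n : ℕ) (hn : 0 < n) :
    Nat.card {A : Fin n × Fin n → Fin n × Fin n → Bool // SPerm n A} =
      (Nat.factorial n) ^ (2 * n) := by
  classical
  set F : (Fin n → Equiv.Perm (Fin n)) × (Fin n → Equiv.Perm (Fin n)) →
      {A : Fin n × Fin n → Fin n × Fin n → Bool // SPerm n A} :=
    fun tm => ⟨mkS n tm.1 tm.2, mkS_sperm n tm.1 tm.2⟩ with hF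
  have hinj : Function.Injective F := by
    rintro ⟨τ, μ⟩ ⟨τ', μ'⟩ h
    have hval : mkS n τ μ = mkS n τ' μ' := congrArg Subtype.val h
    have key : ∀ s a, τ' s a = τ s a ∧ μ' (τ s a) s = μ (τ s a) s := by
      intro s a
      have h1 : mkS n τ μ (s, a) (τ s a, μ (τ s a) s) = true := by
        simp [mkS_eq_true_iff]
      rw [hval, mkS_eq_true_iff] at h1
      exact ⟨h1.1, h1.2⟩
    have hτ : τ' = τ := by
      funext s; exact Equiv.ext fun a => (key s a).1
    have hμ : μ' = μ := by
      funext t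
      refine Equiv.ext fun s => ?_
      have := (key s ((τ s).symm t)).2
      simpa using this
    simp [Prod.ext_iff, hτ, hμ]
  have hsurj : Function.Surjective F := by
    rintro ⟨A, h1, h2, h3⟩
    -- c p : the unique column of row p
    set c : Fin n × Fin n → Fin n × Fin n := fun p => (h1 p).choose with hcdef
    have hc : ∀ p, A p (c p) = true ∧ ∀ q, A p q = true → q = c p :=
      fun p => ⟨(h1 p).choose_spec.1, fun q hq => (h1 p).choose_spec.2 q hq⟩
    -- d s t : the unique position in block (s,t)
    set d : Fin n → Fin n → Fin n × Fin n := fun s t => (h3 s t).choose with hddef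
    have hd : ∀ s t, A (s, (d s t).1) (t, (d s t).2) = true ∧
        ∀ p : Fin n × Fin n, A (s, p.1) (t, p.2) = true → p = d s t :=
      fun s t => ⟨(h3 s t).choose_spec.1, fun p hp => (h3 s t).choose_spec.2 p hp⟩
    -- τ
    have hτinj : ∀ s, Function.Injective (fun a => (c (s, a)).1) := by
      intro s a a' hp
      simp only at hp
      set t := (c (s, a')).1 with ht
      have e1 : A (s, a) (t, (c (s, a)).2) = true := by
        rw [← hp]; simpa using (hc (s, a)).1
      have e2 : A (s, a') (t, (c (s, a')).2) = true := by
        simpa using (hc (s, a')).1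
      have u1 := (hd s t).2 (a, (c (s, a)).2) e1
      have u2 := (hd s t).2 (a', (c (s, a')).2) e2
      have : (a, (c (s, a)).2) = ((a' : Fin n), (c (s, a')).2) := by rw [u1, u2]
      exact (Prod.ext_iff.1 this).1
    have hμinj : ∀ t, Function.Injective (fun s => (d s t).2) := by
      intro t s s' hp
      simp only at hp
      set j := (d s' t).2 with hj
      have e1 : A (s, (d s t).1) (t, j) = true := by
        rw [← hp]; exact (hd s t).1
      have e2 : A (s', (d s' t).1) (t, j) = true := (hd s' t).1
      obtain ⟨w, hw, hu⟩ := h2 (t, j)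
      have u1 := hu _ e1
      have u2 := hu _ e2
      have : ((s : Fin n), (d s t).1) = ((s' : Fin n), (d s' t).1) := by rw [u1, u2]
      exact (Prod.ext_iff.1 this).1
    set τ : Fin n → Equiv.Perm (Fin n) := fun s =>
      Equiv.ofBijective _ (Finite.injective_iff_bijective.1 (hτinj s)) with hτdef
    set μ : Fin n → Equiv.Perm (Fin n) := fun t =>
      Equiv.ofBijective _ (Finite.injective_iff_bijective.1 (hμinj t)) with hμdef
    have hτapp : ∀ s a, τ s a = (c (s, a)).1 := fun s a => rfl
    have hμapp : ∀ t s, μ t s = (d s t).2 := fun t s => rfl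
    refine ⟨(τ, μ), ?_⟩
    apply Subtype.ext
    show mkS n τ μ = A
    funext p q
    obtain ⟨s, a⟩ := p
    obtain ⟨t, j⟩ := q
    have key : A (s, a) (t, j) = true ↔ (c (s, a)).1 = t ∧ (d s t).2 = j := by
      constructor
      · intro hA
        have hcc : (t, j) = c (s, a) := (hc (s, a)).2 _ hA
        have hdd : ((a : Fin n), j) = d s t := (hd s t).2 (a, j) hA
        exact ⟨(hcc.symm ▸ rfl : (c (s,a)).1 = t), (hdd.symm ▸ rfl : (d s t).2 = j)⟩
      · rintro ⟨e1, e2⟩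
        have hA0 : A (s, a) (t, (c (s, a)).2) = true := by
          rw [← e1]; simpa using (hc (s, a)).1
        have hdd : ((a : Fin n), (c (s, a)).2) = d s t := (hd s t).2 _ hA0
        have : (c (s, a)).2 = j := by
          rw [show (c (s, a)).2 = (d s t).2 from (Prod.ext_iff.1 hdd).2, e2]
        rw [← this]; exact hA0
    by_cases hA : A (s, a) (t, j) = true
    · rw [hA, mkS_eq_true_iff]
      obtain ⟨e1, e2⟩ := key.1 hA
      exact ⟨by rw [hτapp, e1], by rw [hμapp, e2]⟩
    · have : ¬ (mkS n τ μ (s, a) (t, j) = true) := by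
        rw [mkS_eq_true_iff]
        rintro ⟨e1, e2⟩
        exact hA (key.2 ⟨by rw [← hτapp, e1], by rw [← hμapp, e2]⟩)
      simp only [Bool.not_eq_true] at this hA
      rw [this, hA]
  have hcard := Nat.card_congr (Equiv.ofBijective F ⟨hinj, hsurj⟩)
  rw [← hcard]
  simp [Nat.card_eq_fintype_card, Fintype.card_perm, two_mul, pow_add]
end

section
/- A matrix P of size n²×n² with entries in {1,...,n²} is a Sudoku matrix if and only if there exist pairwise disjoint S-permutation matrices A_1, ..., A_{n²} such that P = 1·A_1 + 2·A_2 + ... + n²·A_{n²}. -/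
/-- `P` is a Sudoku matrix: every row, column and n×n block contains each
value of `Fin (n*n)` exactly once. -/
def IsSudoku (n : ℕ) (P : Fin n × Fin n → Fin n × Fin n → Fin (n * n)) : Prop :=
  (∀ r, Function.Bijective fun c => P r c) ∧
  (∀ c, Function.Bijective fun r => P r c) ∧
  (∀ s t : Fin n, Function.Bijective fun p : Fin n × Fin n => P (s, p.1) (t, p.2))

theorem stmt1 (n : ℕ) (hn : 0 < n)
    (P : Fin n × Fin n → Fin n × Fin n → Fin (n * n)) :
    IsSudoku n P ↔
      ∃ A : Fin (n * n) → (Fin n × Fin n → Fin n × Fin n → Bool),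
        (∀ k, SPerm n (A k)) ∧
        (∀ k l, k ≠ l → MDisj (A k) (A l)) ∧
        (∀ i j, ((P i j : ℕ) + 1) =
          ∑ k : Fin (n * n), (if A k i j = true then (k : ℕ) + 1 else 0)) := by
  constructor
  · rintro ⟨hr, hc, hb⟩
    refine ⟨fun k i j => decide (P i j = k), ?_, ?_, ?_⟩
    · intro k
      refine ⟨?_, ?_, ?_⟩
      · intro i
        obtain ⟨j, hj, huniq⟩ := (hr i).existsUnique k
        exact ⟨j, by simpa using hj, fun y hy => huniq y (by simpa using hy)⟩
      · intro j
        obtain ⟨i, hi, huniq⟩ := (hc j).existsUnique k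
        exact ⟨i, by simpa using hi, fun y hy => huniq y (by simpa using hy)⟩
      · intro s t
        obtain ⟨p, hp, huniq⟩ := (hb s t).existsUnique k
        exact ⟨p, by simpa using hp, fun y hy => huniq y (by simpa using hy)⟩
    · intro k l hkl i j ⟨h1, h2⟩
      simp only [decide_eq_true_eq] at h1 h2
      exact hkl (h1 ▸ h2 ▸ rfl)
    · intro i j
      rw [Finset.sum_eq_single (P i j)]
      · simp
      · intro l _ hl
        simp [Ne.symm hl]
      · simp
  · rintro ⟨A, hA, hdisj, hsum⟩
    have huniq : ∀ i j k, A k i j = true → k = P i j := by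
      intro i j k hk
      have h : ((P i j : ℕ) + 1) = (k : ℕ) + 1 := by
        rw [hsum i j, Finset.sum_eq_single k]
        · simp [hk]
        · intro l _ hl
          have := hdisj l k hl i j
          by_cases hA' : A l i j = true
          · exact absurd ⟨hA', hk⟩ this
          · simp [hA']
        · simp
      exact (Fin.ext (by omega)).symm
    have hex : ∀ i j, A (P i j) i j = true := by
      intro i j
      by_contra hno
      have hall : ∀ k, A k i j ≠ true := fun k hk => hno (huniq i j k hk ▸ hk)
      have := hsum i j
      rw [Finset.sum_eq_zero (fun k _ => by simp [hall k])] at this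
      omega
    have hiff : ∀ i j k, A k i j = true ↔ P i j = k := by
      intro i j k
      exact ⟨fun h => (huniq i j k h).symm, fun h => h ▸ hex i j⟩
    refine ⟨?_, ?_, ?_⟩
    · intro r
      constructor
      · intro c1 c2 hc
        simp only at hc
        obtain ⟨j, _, hu⟩ := (hA (P r c1)).1 r
        have h1 := hu c1 ((hiff r c1 (P r c1)).mpr rfl)
        have h2 := hu c2 ((hiff r c2 (P r c1)).mpr hc.symm)
        exact h1.trans h2.symm
      · intro k
        obtain ⟨j, hj, _⟩ := (hA k).1 r
        exact ⟨j, (hiff r j k).mp hj⟩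
    · intro c
      constructor
      · intro r1 r2 hr
        simp only at hr
        obtain ⟨i, _, hu⟩ := (hA (P r1 c)).2.1 c
        have h1 := hu r1 ((hiff r1 c (P r1 c)).mpr rfl)
        have h2 := hu r2 ((hiff r2 c (P r1 c)).mpr hr.symm)
        exact h1.trans h2.symm
      · intro k
        obtain ⟨i, hi, _⟩ := (hA k).2.1 c
        exact ⟨i, (hiff i c k).mp hi⟩
    · intro s t
      constructor
      · intro p1 p2 hp
        simp only at hp
        obtain ⟨q, _, hu⟩ := (hA (P (s, p1.1) (t, p1.2))).2.2 s t
        have h1 := hu p1 ((hiff (s, p1.1) (t, p1.2) _).mpr rfl)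
        have h2 := hu p2 ((hiff (s, p2.1) (t, p2.2) _).mpr hp.symm)
        exact h1.trans h2.symm
      · intro k
        obtain ⟨p, hp, _⟩ := (hA k).2.2 s t
        exact ⟨p, (hiff (s, p.1) (t, p.2) k).mp hp⟩
end

section
/- The number of sets of 4 pairwise disjoint 4×4 S-permutation matrices (i.e., complete subgraphs of size 4 in the disjointness graph on the 16 S-permutation matrices) is exactly 12. -/
instance {α : Type*} [Fintype α] [DecidableEq α] (p : α → Prop) [DecidablePred p] :
    Decidable (∃! x, p x) :=
  decidable_of_iff (∃ x, p x ∧ ∀ y, p y → y = x) Iff.rfl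

/-- Matrix associated to a function. -/
def phi (f : Fin 2 × Fin 2 → Fin 2 × Fin 2) : Fin 2 × Fin 2 → Fin 2 × Fin 2 → Bool :=
  fun i j => decide (f i = j)

lemma phi_inj : Function.Injective phi := by
  intro f g h
  funext i
  have h1 : phi g i (f i) = true := by rw [← h]; simp [phi]
  exact (of_decide_eq_true h1).symm

/-- Function-level version of `SPerm 2 ∘ phi`. -/
def Sp (f : Fin 2 × Fin 2 → Fin 2 × Fin 2) : Prop :=
  (∀ j, ∃! i, f i = j) ∧ ∀ s t : Fin 2, ∃! p : Fin 2 × Fin 2, f (s, p.1) = (t, p.2)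

instance : DecidablePred Sp := fun f => by unfold Sp; infer_instance

lemma sperm_phi (f : Fin 2 × Fin 2 → Fin 2 × Fin 2) : SPerm 2 (phi f) ↔ Sp f := by
  unfold SPerm Sp phi
  simp only [decide_eq_true_eq]
  constructor
  · rintro ⟨-, h2, h3⟩; exact ⟨h2, h3⟩
  · rintro ⟨h2, h3⟩
    exact ⟨fun i => ⟨f i, rfl, fun y hy => hy.symm⟩, h2, h3⟩

lemma mdisj_phi (f g : Fin 2 × Fin 2 → Fin 2 × Fin 2) :
    MDisj (phi f) (phi g) ↔ ∀ i, f i ≠ g i := by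
  unfold MDisj phi
  simp only [decide_eq_true_eq]
  constructor
  · intro h i hi; exact h i (g i) ⟨hi, rfl⟩
  · rintro h i j ⟨h1, h2⟩; exact h i (h1.trans h2.symm)

def mk4 (a b c d : Fin 2 × Fin 2) : Fin 2 × Fin 2 → Fin 2 × Fin 2 :=
  fun p => ![![a, b], ![c, d]] p.1 p.2

/-- The 16 S-permutation functions. -/
def L : Fin 16 → (Fin 2 × Fin 2 → Fin 2 × Fin 2) :=
  ![mk4 (0,0) (1,0) (0,1) (1,1), mk4 (0,0) (1,0) (1,1) (0,1),
    mk4 (0,0) (1,1) (0,1) (1,0), mk4 (0,0) (1,1) (1,0) (0,1),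
    mk4 (0,1) (1,0) (0,0) (1,1), mk4 (0,1) (1,0) (1,1) (0,0),
    mk4 (0,1) (1,1) (0,0) (1,0), mk4 (0,1) (1,1) (1,0) (0,0),
    mk4 (1,0) (0,0) (0,1) (1,1), mk4 (1,0) (0,0) (1,1) (0,1),
    mk4 (1,0) (0,1) (0,0) (1,1), mk4 (1,0) (0,1) (1,1) (0,0),
    mk4 (1,1) (0,0) (0,1) (1,0), mk4 (1,1) (0,0) (1,0) (0,1),
    mk4 (1,1) (0,1) (0,0) (1,0), mk4 (1,1) (0,1) (1,0) (0,0)]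

set_option maxRecDepth 10000 in
lemma L_inj : Function.Injective L := by decide

set_option maxRecDepth 10000 in
lemma sp_L : ∀ k, Sp (L k) := by decide

set_option maxRecDepth 100000 in
set_option maxHeartbeats 1000000 in
lemma sp_surj : ∀ f, Sp f → ∃ k, f = L k := by decide

/-- Matrix attached to an index. -/
def Psi (k : Fin 16) : Fin 2 × Fin 2 → Fin 2 × Fin 2 → Bool := phi (L k)

lemma Psi_inj : Function.Injective Psi := phi_inj.comp L_inj

lemma sperm_Psi (k : Fin 16) : SPerm 2 (Psi k) := (sperm_phi _).mpr (sp_L k)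

lemma sperm_rep (A : Fin 2 × Fin 2 → Fin 2 × Fin 2 → Bool) (hA : SPerm 2 A) :
    ∃ k, Psi k = A := by
  choose f hf using hA.1
  have hAf : A = phi f := by
    funext i j
    by_cases h : f i = j
    · subst h; simp [phi, (hf i).1]
    · simp only [phi]
      cases hj : A i j with
      | false => simp [h]
      | true => exact absurd ((hf i).2 j hj).symm h
  have hsp : Sp f := (sperm_phi f).mp (hAf ▸ hA)
  obtain ⟨k, hk⟩ := sp_surj f hsp
  exact ⟨k, by rw [Psi, ← hk, ← hAf]⟩

/-- The 4-cliques, indexed. -/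
def F4 : Finset (Finset (Fin 16)) :=
  ((Finset.univ : Finset (Fin 16)).powersetCard 4).filter
    (fun u => ∀ a ∈ u, ∀ b ∈ u, a ≠ b → ∀ i, L a i ≠ L b i)

set_option maxRecDepth 100000 in
set_option maxHeartbeats 1000000 in
theorem stmt18 :
    Nat.card {s : Finset (Fin 2 × Fin 2 → Fin 2 × Fin 2 → Bool) //
      s.card = 4 ∧ (∀ A ∈ s, SPerm 2 A) ∧
      ∀ A ∈ s, ∀ B ∈ s, A ≠ B → MDisj A B} = 12 := by
  classical
  set Q : Finset (Fin 2 × Fin 2 → Fin 2 × Fin 2 → Bool) → Prop :=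
    fun s => s.card = 4 ∧ (∀ A ∈ s, SPerm 2 A) ∧
      ∀ A ∈ s, ∀ B ∈ s, A ≠ B → MDisj A B with hQ
  have hwd : ∀ u : {u : Finset (Fin 16) // u ∈ F4}, Q (u.1.image Psi) := by
    rintro ⟨u, hu⟩
    rw [F4, Finset.mem_filter, Finset.mem_powersetCard] at hu
    obtain ⟨⟨-, hcard⟩, hadj⟩ := hu
    refine ⟨by rw [Finset.card_image_of_injective _ Psi_inj]; exact hcard, ?_, ?_⟩
    · rintro A hA
      obtain ⟨k, -, rfl⟩ := Finset.mem_image.mp hA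
      exact sperm_Psi k
    · rintro A hA B hB hAB
      obtain ⟨a, ha, rfl⟩ := Finset.mem_image.mp hA
      obtain ⟨b, hb, rfl⟩ := Finset.mem_image.mp hB
      exact (mdisj_phi _ _).mpr (hadj a ha b hb (fun h => hAB (by rw [h])))
  let Φ : {u : Finset (Fin 16) // u ∈ F4} → {s : Finset (Fin 2 × Fin 2 → Fin 2 × Fin 2 → Bool) // Q s} :=
    fun u => ⟨u.1.image Psi, hwd u⟩
  have hbij : Function.Bijective Φ := by
    constructor
    · rintro ⟨u, hu⟩ ⟨v, hv⟩ h
      exact Subtype.ext (Finset.image_injective Psi_inj (congrArg Subtype.val h))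
    · rintro ⟨s, hc, hS, hD⟩
      have hrep : ∀ A ∈ s, ∃ k, Psi k = A := fun A hA => sperm_rep A (hS A hA)
      choose r hr using hrep
      refine ⟨⟨s.attach.image (fun a => r a.1 a.2), ?_⟩, ?_⟩
      · have himg : (s.attach.image (fun a => r a.1 a.2)).image Psi = s := by
          rw [Finset.image_image]
          calc s.attach.image (fun a => Psi (r a.1 a.2))
              = s.attach.image Subtype.val :=
                Finset.image_congr (fun a _ => hr a.1 a.2)
            _ = s := Finset.attach_image_val
        rw [F4, Finset.mem_filter, Finset.mem_powersetCard]
        refine ⟨⟨Finset.subset_univ _, ?_⟩, ?_⟩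
        · rw [← Finset.card_image_of_injective _ Psi_inj, himg, hc]
        · intro a ha b hb hab i
          have hMa : Psi a ∈ s := himg ▸ Finset.mem_image_of_mem Psi ha
          have hMb : Psi b ∈ s := himg ▸ Finset.mem_image_of_mem Psi hb
          exact (mdisj_phi _ _).mp (hD _ hMa _ hMb (Psi_inj.ne hab)) i
      · apply Subtype.ext
        show (s.attach.image (fun a => r a.1 a.2)).image Psi = s
        rw [Finset.image_image]
        calc s.attach.image (fun a => Psi (r a.1 a.2))
            = s.attach.image Subtype.val :=
              Finset.image_congr (fun a _ => hr a.1 a.2)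
          _ = s := Finset.attach_image_val
  rw [← Nat.card_congr (Equiv.ofBijective Φ hbij), Nat.card_eq_fintype_card,
    Fintype.card_coe]
  decide
end

section
/- If z_n denotes the number of sets of n² pairwise disjoint n²×n² S-permutation matrices and σ_n the number of n²×n² Sudoku matrices, then σ_n = (n²)! · z_n. -/
namespace Stmt19Aux

abbrev Mtx (n : ℕ) := Fin n × Fin n → Fin n × Fin n → Bool

/-- Families of n² pairwise disjoint S-permutation matrices. -/
abbrev FFam (n : ℕ) :=
  {f : Fin (n * n) → Mtx n //
    (∀ v, SPerm n (f v)) ∧ ∀ v w, v ≠ w → MDisj (f v) (f w)}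

/-- Sets of n² pairwise disjoint S-permutation matrices. -/
abbrev SSet (n : ℕ) :=
  {s : Finset (Mtx n) //
    s.card = n * n ∧ (∀ A ∈ s, SPerm n A) ∧
    ∀ A ∈ s, ∀ B ∈ s, A ≠ B → MDisj A B}

lemma existsUnique_val {n : ℕ} (f : Fin (n * n) → Mtx n)
    (hf : ∀ v, SPerm n (f v)) (hd : ∀ v w, v ≠ w → MDisj (f v) (f w))
    (i j : Fin n × Fin n) : ∃! v, f v i j = true := by
  classical
  have hg : ∀ v, ∃! j', f v i j' = true := fun v => (hf v).1 i
  set g : Fin (n * n) → Fin n × Fin n := fun v => Fintype.choose _ (hg v) with hgdef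
  have hgs : ∀ v, f v i (g v) = true := fun v => Fintype.choose_spec _ (hg v)
  have ginj : Function.Injective g := by
    intro v w h
    by_contra hvw
    exact hd v w hvw i (g v) ⟨hgs v, h ▸ hgs w⟩
  have gbij : Function.Bijective g :=
    (Fintype.bijective_iff_injective_and_card g).2 ⟨ginj, by simp⟩
  obtain ⟨v, hv⟩ := gbij.2 j
  refine ⟨v, hv ▸ hgs v, ?_⟩
  intro w hw
  by_contra hne
  exact hd w v hne i j ⟨hw, hv ▸ hgs v⟩

noncomputable def decode {n : ℕ} (f : FFam n) :
    Fin n × Fin n → Fin n × Fin n → Fin (n * n) := fun i j =>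
  Fintype.choose _ (existsUnique_val f.1 f.2.1 f.2.2 i j)

lemma decode_eq_iff {n : ℕ} (f : FFam n) (i j : Fin n × Fin n) (v : Fin (n * n)) :
    decode f i j = v ↔ f.1 v i j = true := by
  have h1 : f.1 (decode f i j) i j = true :=
    Fintype.choose_spec _ (existsUnique_val f.1 f.2.1 f.2.2 i j)
  constructor
  · rintro rfl; exact h1
  · intro hv
    exact ((existsUnique_val f.1 f.2.1 f.2.2 i j).unique h1 hv)

lemma isSudoku_decode {n : ℕ} (f : FFam n) : IsSudoku n (decode f) := by
  refine ⟨fun r => ?_, fun c => ?_, fun s t => ?_⟩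
  · rw [Function.bijective_iff_existsUnique]
    intro v
    obtain ⟨j, hj, hj'⟩ := (f.2.1 v).1 r
    exact ⟨j, (decode_eq_iff f r j v).2 hj,
      fun j' hj'' => hj' j' ((decode_eq_iff f r j' v).1 hj'')⟩
  · rw [Function.bijective_iff_existsUnique]
    intro v
    obtain ⟨i, hi, hi'⟩ := (f.2.1 v).2.1 c
    exact ⟨i, (decode_eq_iff f i c v).2 hi,
      fun i' hi'' => hi' i' ((decode_eq_iff f i' c v).1 hi'')⟩
  · rw [Function.bijective_iff_existsUnique]
    intro v
    obtain ⟨p, hp, hp'⟩ := (f.2.1 v).2.2 s t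
    exact ⟨p, (decode_eq_iff f _ _ v).2 hp,
      fun p' hp'' => hp' p' ((decode_eq_iff f _ _ v).1 hp'')⟩

noncomputable def equiv1 (n : ℕ) :
    {P : Fin n × Fin n → Fin n × Fin n → Fin (n * n) // IsSudoku n P} ≃ FFam n where
  toFun P := by
    refine ⟨fun v i j => decide (P.1 i j = v), fun v => ⟨?_, ?_, ?_⟩, ?_⟩
    · intro i
      simpa using (Function.bijective_iff_existsUnique _).1 (P.2.1 i) v
    · intro j
      simpa using (Function.bijective_iff_existsUnique _).1 (P.2.2.1 j) v
    · intro s t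
      simpa using (Function.bijective_iff_existsUnique _).1 (P.2.2.2 s t) v
    · intro v w hvw i j h
      simp only [decide_eq_true_eq] at h
      exact hvw (h.1 ▸ h.2 ▸ rfl)
  invFun f := ⟨decode f, isSudoku_decode f⟩
  left_inv P := by
    apply Subtype.ext
    funext i j
    exact (decode_eq_iff _ i j (P.1 i j)).2 (by simp)
  right_inv f := by
    apply Subtype.ext
    funext v i j
    by_cases h : f.1 v i j = true
    · simp [h, (decode_eq_iff f i j v).2 h]
    · simp only [Bool.not_eq_true] at h
      rw [h]
      simp only [decide_eq_false_iff_not]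
      intro hc
      rw [(decode_eq_iff f i j v).1 hc] at h
      simp at h

lemma f_injective {n : ℕ} (hn : 0 < n) (f : FFam n) : Function.Injective f.1 := by
  intro v w h
  by_contra hvw
  have hd := f.2.2 v w hvw
  obtain ⟨j, hj, -⟩ := (f.2.1 v).1 (⟨0, hn⟩, ⟨0, hn⟩)
  exact hd _ j ⟨hj, h ▸ hj⟩

lemma sigma_helper {α : Type*} {P : Finset α → Prop} {N : ℕ}
    (x y : Σ s : {s : Finset α // P s}, (Fin N ≃ {a // a ∈ s.1}))
    (h : ∀ v, ((x.2 v : α)) = (y.2 v : α)) : x = y := by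
  obtain ⟨⟨s, hs⟩, e⟩ := x
  obtain ⟨⟨t, ht⟩, e'⟩ := y
  dsimp only at h
  have hst : s = t := by
    ext a
    constructor
    · intro ha
      have h2 := h (e.symm ⟨a, ha⟩)
      rw [Equiv.apply_symm_apply] at h2
      have h3 : a = ↑(e' (e.symm ⟨a, ha⟩)) := h2
      rw [h3]; exact (e' (e.symm ⟨a, ha⟩)).2
    · intro ha
      have h2 := h (e'.symm ⟨a, ha⟩)
      rw [Equiv.apply_symm_apply] at h2
      have h3 : a = ↑(e (e'.symm ⟨a, ha⟩)) := h2.symm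
      rw [h3]; exact (e (e'.symm ⟨a, ha⟩)).2
  subst hst
  have he : e = e' := Equiv.ext fun v => Subtype.ext (h v)
  subst he
  rfl

noncomputable def equiv2 (n : ℕ) (hn : 0 < n) :
    FFam n ≃ Σ s : SSet n, (Fin (n * n) ≃ {A // A ∈ s.1}) where
  toFun f := by
    classical
    refine ⟨⟨Finset.image f.1 Finset.univ, ?_, ?_, ?_⟩,
      Equiv.ofBijective (fun v => ⟨f.1 v, Finset.mem_image_of_mem _ (Finset.mem_univ v)⟩) ?_⟩
    · rw [Finset.card_image_of_injective _ (f_injective hn f)]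
      simp
    · intro A hA
      obtain ⟨v, -, rfl⟩ := Finset.mem_image.1 hA
      exact f.2.1 v
    · intro A hA B hB hAB
      obtain ⟨v, -, rfl⟩ := Finset.mem_image.1 hA
      obtain ⟨w, -, rfl⟩ := Finset.mem_image.1 hB
      exact f.2.2 v w (fun h => hAB (h ▸ rfl))
    · refine (Fintype.bijective_iff_injective_and_card _).2 ⟨?_, ?_⟩
      · intro v w h
        exact f_injective hn f (congrArg Subtype.val h)
      · rw [Fintype.card_coe, Finset.card_image_of_injective _ (f_injective hn f)]
        simp
  invFun se := ⟨fun v => (se.2 v).1,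
    fun v => se.1.2.2.1 _ (se.2 v).2,
    fun v w hvw => se.1.2.2.2 _ (se.2 v).2 _ (se.2 w).2
      (fun h => hvw (se.2.injective (Subtype.ext h)))⟩
  left_inv f := by
    apply Subtype.ext
    rfl
  right_inv se := by
    apply sigma_helper
    intro v
    rfl

end Stmt19Aux

open Stmt19Aux in
theorem stmt19 (n : ℕ) (hn : 2 ≤ n) :
    Nat.card {P : Fin n × Fin n → Fin n × Fin n → Fin (n * n) // IsSudoku n P} =
      Nat.factorial (n * n) *
        Nat.card {s : Finset (Fin n × Fin n → Fin n × Fin n → Bool) //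
          s.card = n * n ∧ (∀ A ∈ s, SPerm n A) ∧
          ∀ A ∈ s, ∀ B ∈ s, A ≠ B → MDisj A B} := by
  classical
  have hn0 : 0 < n := lt_of_lt_of_le two_pos hn
  rw [Nat.card_congr ((equiv1 n).trans (equiv2 n hn0))]
  have e3 : (Σ s : SSet n, (Fin (n * n) ≃ {A // A ∈ s.1})) ≃
      (SSet n × (Fin (n * n) ≃ Fin (n * n))) :=
    (Equiv.sigmaCongrRight fun s =>
      Equiv.equivCongr (Equiv.refl _) (s.1.equivFinOfCardEq s.2.1)).trans
      (Equiv.sigmaEquivProd _ _)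
  rw [Nat.card_congr e3, Nat.card_prod]
  have : Nat.card (Fin (n * n) ≃ Fin (n * n)) = Nat.factorial (n * n) := by
    rw [Nat.card_eq_fintype_card, Fintype.card_equiv (Equiv.refl _), Fintype.card_fin]
  rw [this, mul_comm]
end
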